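/- Let k ≥ 3 be an integer and let D = {y ∈ ℂ : |y − 1| ≤ 1} be the closed disk of radius 1 centered at 1. Then the set of real numbers expressible as a product of k − 1 elements of D, namely ℝ ∩ {∏_{i=1}^{k−1} y_i : y_1, …, y_{k−1} ∈ D}, is exactly the closed interval [−2^{k−1} cos^{k−1}(π/(k−1)), 2^{k−1}]. -/

import Mathlib

open scoped Classical
open Finset

lemma disk_iff (y : ℂ) : ‖y - 1‖ ≤ 1 ↔ ‖y‖ ^ 2 ≤ 2 * y.re := by
  have h1 := Complex.sq_norm (y - 1)
  have h2 := Complex.sq_norm y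
  have h3 : Complex.normSq (y - 1) = Complex.normSq y - 2 * y.re + 1 := by
    simp [Complex.normSq_apply, Complex.sub_re, Complex.sub_im]; ring
  constructor
  · intro h
    nlinarith [norm_nonneg (y - 1), norm_nonneg y]
  · intro h
    nlinarith [norm_nonneg (y - 1), norm_nonneg y,
      sq_nonneg (‖y - 1‖ - 1), sq_nonneg (‖y - 1‖ + 1)]

/-- Let `k ≥ 3` and let `D = {y ∈ ℂ : |y − 1| ≤ 1}` be the closed disk of radius `1`
centered at `1`.  The set of real numbers expressible as a product of `k − 1` elements
of `D` is exactly the closed interval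
`[−2^{k−1} cos^{k−1}(π/(k−1)), 2^{k−1}]`. -/
theorem stmt12 (k : ℕ) (hk : 3 ≤ k) (x : ℝ) :
    (∃ y : Fin (k - 1) → ℂ,
        (∀ i, ‖y i - 1‖ ≤ 1) ∧ (x : ℂ) = ∏ i, y i) ↔
    x ∈ Set.Icc
      (-(2 ^ (k - 1) * Real.cos (Real.pi / (k - 1)) ^ (k - 1)))
      ((2 : ℝ) ^ (k - 1)) := by
  set n := k - 1 with hn
  have hn2 : 2 ≤ n := by omega
  have hn0 : (0:ℝ) < n := by
    have : 0 < n := by omega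
    exact_mod_cast this
  have hcast : ((k:ℝ) - 1) = (n : ℝ) := by
    rw [hn]; push_cast [Nat.cast_sub (by omega : 1 ≤ k)]; ring
  rw [hcast]
  have hpin : 0 ≤ Real.pi / n := by positivity
  have hpin2 : Real.pi / n ≤ Real.pi / 2 := by
    apply div_le_div_of_nonneg_left Real.pi_pos.le (by norm_num)
    exact_mod_cast hn2
  have hcosnn : 0 ≤ Real.cos (Real.pi / n) :=
    Real.cos_nonneg_of_mem_Icc ⟨by linarith, hpin2⟩
  have hCnn : (0:ℝ) ≤ 2 ^ n * Real.cos (Real.pi / n) ^ n := by positivity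
  constructor
  · rintro ⟨y, hy, hx⟩
    have habs2 : ∀ i, ‖y i‖ ≤ 2 := by
      intro i
      calc ‖y i‖ = ‖(y i - 1) + 1‖ := by ring_nf
        _ ≤ ‖y i - 1‖ + ‖(1:ℂ)‖ := norm_add_le _ _
        _ ≤ 1 + 1 := by simpa using hy i
        _ = 2 := by norm_num
    have hxabs : |x| = ∏ i, ‖y i‖ := by
      rw [← Real.norm_eq_abs, ← Complex.norm_real, hx, norm_prod]
    constructor
    · -- lower bound
      rcases le_or_gt 0 x with hx0 | hx0
      · linarith
      · -- x < 0
        have hyne : ∀ i, y i ≠ 0 := by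
          intro i hi
          have hz : (x:ℂ) = 0 := by rw [hx, Finset.prod_eq_zero (Finset.mem_univ i) hi]
          rw [Complex.ofReal_eq_zero] at hz
          linarith
        have hre : ∀ i, 0 < (y i).re := by
          intro i
          have h1 := (disk_iff (y i)).mp (hy i)
          have h2 : 0 < ‖y i‖ := norm_pos_iff.mpr (hyne i)
          nlinarith
        set θ : Fin n → ℝ := fun i => Complex.arg (y i) with hθdef
        have hθ : ∀ i, |θ i| < Real.pi / 2 := fun i =>
          Complex.abs_arg_lt_pi_div_two_iff.mpr (Or.inl (hre i))
        have hcosθpos : ∀ i, 0 < Real.cos (θ i) := fun i =>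
          Real.cos_pos_of_mem_Ioo ⟨(abs_lt.mp (hθ i)).1, (abs_lt.mp (hθ i)).2⟩
        have hcosb : ∀ i, ‖y i‖ ≤ 2 * Real.cos (θ i) := by
          intro i
          have h1 := (disk_iff (y i)).mp (hy i)
          have h2 : 0 < ‖y i‖ := norm_pos_iff.mpr (hyne i)
          have h3 : ‖y i‖ * Real.cos (θ i) = (y i).re :=
            Complex.norm_mul_cos_arg (y i)
          nlinarith
        set S : ℝ := ∑ i, θ i with hSdef
        set R : ℝ := ∏ i, ‖y i‖ with hRdef
        have hRpos : 0 < R := Finset.prod_pos (fun i _ => norm_pos_iff.mpr (hyne i))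
        have hpolar : (x:ℂ) = (R:ℝ) * Complex.exp (S * Complex.I) := by
          rw [hx]
          have h1 : ∏ i, y i
              = ∏ i, (((‖y i‖ : ℝ) : ℂ) * Complex.exp ((θ i : ℝ) * Complex.I)) :=
            Finset.prod_congr rfl (fun i _ => (Complex.norm_mul_exp_arg_mul_I (y i)).symm)
          rw [h1, Finset.prod_mul_distrib, ← Complex.exp_sum, ← Finset.sum_mul,
            hRdef, hSdef]
          push_cast
          ring
        have hRx : R = -x := by rw [← hxabs, abs_of_neg hx0]
        have hexp : Complex.exp ((S:ℝ) * Complex.I) = -1 := by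
          rw [hRx] at hpolar
          push_cast at hpolar
          have hx0' : (x:ℂ) ≠ 0 := Complex.ofReal_ne_zero.mpr hx0.ne
          have h2 : (x:ℂ) * (1 + Complex.exp ((S:ℝ) * Complex.I)) = 0 := by
            linear_combination hpolar
          rcases mul_eq_zero.mp h2 with h3 | h3
          · exact absurd h3 hx0'
          · linear_combination h3
        have hcosS : Real.cos S = -1 := by
          have := congrArg Complex.re hexp
          rw [Complex.exp_ofReal_mul_I_re] at this
          simpa using this
        obtain ⟨m, hm⟩ : ∃ m : ℤ, (m:ℝ) * (2 * Real.pi) = S + Real.pi := by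
          rw [← Real.cos_eq_one_iff]
          rw [Real.cos_add, Real.cos_pi, Real.sin_pi, hcosS]; ring
        have hSabs_lb : Real.pi ≤ |S| := by
          have hSval : S = (2 * (m:ℝ) - 1) * Real.pi := by push_cast at hm ⊢; linarith
          rw [hSval, abs_mul, abs_of_pos Real.pi_pos]
          have h1 : (1:ℤ) ≤ |2 * m - 1| := Int.one_le_abs (by omega)
          have h2 : (1:ℝ) ≤ |2 * (m:ℝ) - 1| := by
            calc (1:ℝ) = ((1:ℤ):ℝ) := by norm_num
              _ ≤ ((|2 * m - 1| : ℤ) : ℝ) := by exact_mod_cast h1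
              _ = |2 * (m:ℝ) - 1| := by rw [Int.cast_abs]; push_cast; ring_nf
          nlinarith [Real.pi_pos]
        have hSabs_ub : |S| < n * (Real.pi / 2) := by
          calc |S| ≤ ∑ i, |θ i| := Finset.abs_sum_le_sum_abs _ _
            _ < ∑ _i : Fin n, (Real.pi / 2) := by
                apply Finset.sum_lt_sum_of_nonempty
                · exact Finset.univ_nonempty_iff.mpr (Fin.pos_iff_nonempty.mp (by omega))
                · exact fun i _ => hθ i
            _ = n * (Real.pi / 2) := by
                rw [Finset.sum_const, Finset.card_univ, Fintype.card_fin, nsmul_eq_mul]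
        set a : ℝ := |S| / n with hadef
        have ha1 : Real.pi / n ≤ a := by
          rw [hadef]
          exact div_le_div_of_nonneg_right hSabs_lb hn0.le
        have ha2 : a < Real.pi / 2 := by
          rw [hadef, div_lt_iff₀ hn0]
          linarith [hSabs_ub]
        have hanonneg : 0 ≤ a := by positivity
        -- Jensen
        have hw : ∀ i ∈ Finset.univ (α := Fin n), (0:ℝ) ≤ 1 / n := fun _ _ => by positivity
        have hw1 : ∑ _i : Fin n, (1:ℝ)/n = 1 := by
          rw [Finset.sum_const, Finset.card_univ, Fintype.card_fin, nsmul_eq_mul]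
          field_simp
        have hmem : ∀ i ∈ Finset.univ (α := Fin n),
            θ i ∈ Set.Icc (-(Real.pi/2)) (Real.pi/2) := by
          intro i _
          have h := abs_lt.mp (hθ i)
          exact ⟨by linarith [h.1], by linarith [h.2]⟩
        have hjensen := (strictConcaveOn_cos_Icc.concaveOn).le_map_sum hw hw1 hmem
        simp only [smul_eq_mul] at hjensen
        have hsum1 : ∑ i, (1:ℝ)/n * θ i = S / n := by
          rw [← Finset.mul_sum, ← hSdef]; ring
        rw [hsum1] at hjensen
        set C : ℝ := ∑ i, (1:ℝ)/n * Real.cos (θ i) with hCdef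
        have hCnn' : 0 ≤ C :=
          Finset.sum_nonneg (fun i _ => mul_nonneg (by positivity) (hcosθpos i).le)
        -- AM-GM
        have hamgm := Real.geom_mean_le_arith_mean_weighted Finset.univ
          (fun _ => (1:ℝ)/n) (fun i => Real.cos (θ i)) hw hw1 (fun i _ => (hcosθpos i).le)
        have hprodr : ∏ i, Real.cos (θ i) ^ ((1:ℝ)/n)
            = (∏ i, Real.cos (θ i)) ^ ((1:ℝ)/n) :=
          Real.finset_prod_rpow _ _ (fun i _ => (hcosθpos i).le) _
        set G : ℝ := ∏ i, Real.cos (θ i) with hG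
        have hGpos : 0 < G := Finset.prod_pos (fun i _ => hcosθpos i)
        have hGle : G ≤ C ^ n := by
          have h1 : G ^ ((1:ℝ)/n) ≤ C := by
            rw [← hprodr]; exact hamgm
          calc G = (G ^ ((1:ℝ)/n)) ^ (n:ℕ) := by
                rw [← Real.rpow_natCast (G ^ ((1:ℝ)/n)) n, ← Real.rpow_mul hGpos.le,
                  one_div, inv_mul_cancel₀ hn0.ne', Real.rpow_one]
            _ ≤ C ^ n := pow_le_pow_left₀ (Real.rpow_nonneg hGpos.le _) h1 n
        have hcosSn : Real.cos (S / n) = Real.cos a := by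
          rw [hadef, ← Real.cos_abs (S / n), abs_div, abs_of_pos hn0]
        have hC_le : C ≤ Real.cos (Real.pi / n) := by
          calc C ≤ Real.cos (S / n) := hjensen
            _ = Real.cos a := hcosSn
            _ ≤ Real.cos (Real.pi / n) := by
                apply Real.cos_le_cos_of_nonneg_of_le_pi hpin _ ha1
                linarith [Real.pi_pos]
        have hR_le : R ≤ 2 ^ n * Real.cos (Real.pi / n) ^ n := by
          calc R ≤ ∏ i, (2 * Real.cos (θ i)) :=
                Finset.prod_le_prod (fun i _ => norm_nonneg _) (fun i _ => hcosb i)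
            _ = 2 ^ n * G := by
                rw [Finset.prod_mul_distrib, Finset.prod_const, Finset.card_univ,
                  Fintype.card_fin, hG]
            _ ≤ 2 ^ n * C ^ n := by
                apply mul_le_mul_of_nonneg_left hGle (by positivity)
            _ ≤ 2 ^ n * Real.cos (Real.pi / n) ^ n := by
                apply mul_le_mul_of_nonneg_left _ (by positivity)
                exact pow_le_pow_left₀ hCnn' hC_le n
        linarith
    · -- upper bound
      calc x ≤ |x| := le_abs_self x
        _ = ∏ i, ‖y i‖ := hxabs
        _ ≤ ∏ _i : Fin n, (2:ℝ) :=
            Finset.prod_le_prod (fun i _ => norm_nonneg _) (fun i _ => habs2 i)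
        _ = 2 ^ n := by
            rw [Finset.prod_const, Finset.card_univ, Fintype.card_fin]
  · rintro ⟨h1, h2⟩
    rcases le_or_gt 0 x with hx0 | hx0
    · set r : ℝ := x ^ ((1:ℝ)/n) with hr
      have hrnn : 0 ≤ r := Real.rpow_nonneg hx0 _
      have hrn : r ^ n = x := by
        rw [hr, ← Real.rpow_natCast (x ^ ((1:ℝ)/n)) n, ← Real.rpow_mul hx0, one_div,
          inv_mul_cancel₀ hn0.ne', Real.rpow_one]
      have hr2 : r ≤ 2 := by
        have h2n : ((2:ℝ) ^ (n:ℕ)) ^ ((1:ℝ)/n) = 2 := by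
          rw [← Real.rpow_natCast 2 n, ← Real.rpow_mul (by norm_num), mul_one_div,
            div_self hn0.ne', Real.rpow_one]
        calc r ≤ ((2:ℝ) ^ (n:ℕ)) ^ ((1:ℝ)/n) := Real.rpow_le_rpow hx0 h2 (by positivity)
          _ = 2 := h2n
      refine ⟨fun _ => (r : ℂ), fun i => ?_, ?_⟩
      · rw [show ((r:ℂ) - 1) = ((r - 1 : ℝ) : ℂ) by push_cast; ring, Complex.norm_real, Real.norm_eq_abs,
          abs_le]
        constructor <;> linarith
      · rw [Finset.prod_const, Finset.card_univ, Fintype.card_fin,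
          ← Complex.ofReal_pow, hrn]
    · set c : ℝ := Real.cos (Real.pi / n) with hc
      have ht : 0 < -x := by linarith
      have htle : -x ≤ (2 * c) ^ n := by rw [mul_pow]; linarith
      have hcpos : 0 < c := by
        rcases hcosnn.lt_or_eq with h | h
        · exact h
        · exfalso
          rw [← h] at htle
          simp [zero_pow (by omega : n ≠ 0)] at htle
          linarith
      set r : ℝ := (-x) ^ ((1:ℝ)/n) with hr
      have hrpos : 0 < r := Real.rpow_pos_of_pos ht _
      have hrn : r ^ n = -x := by
        rw [hr, ← Real.rpow_natCast ((-x) ^ ((1:ℝ)/n)) n, ← Real.rpow_mul ht.le, one_div,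
          inv_mul_cancel₀ hn0.ne', Real.rpow_one]
      have hrle : r ≤ 2 * c := by
        have h2n : ((2 * c) ^ (n:ℕ)) ^ ((1:ℝ)/n) = 2 * c := by
          rw [← Real.rpow_natCast (2 * c) n, ← Real.rpow_mul (by positivity), mul_one_div,
            div_self hn0.ne', Real.rpow_one]
        calc r ≤ ((2 * c) ^ (n:ℕ)) ^ ((1:ℝ)/n) := Real.rpow_le_rpow ht.le htle (by positivity)
          _ = 2 * c := h2n
      refine ⟨fun _ => (r : ℂ) * Complex.exp ((Real.pi / n : ℝ) * Complex.I),
        fun i => ?_, ?_⟩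
      · rw [disk_iff]
        have habs : ‖(r:ℂ) * Complex.exp ((Real.pi / n : ℝ) * Complex.I)‖ = r := by
          rw [norm_mul, Complex.norm_real, Real.norm_eq_abs, Complex.norm_exp_ofReal_mul_I,
            abs_of_pos hrpos, mul_one]
        have hrey : ((r:ℂ) * Complex.exp ((Real.pi / n : ℝ) * Complex.I)).re = r * c := by
          rw [Complex.re_ofReal_mul, Complex.exp_ofReal_mul_I_re]
        rw [habs, hrey]
        nlinarith
      · rw [Finset.prod_const, Finset.card_univ, Fintype.card_fin, mul_pow,
          ← Complex.exp_nat_mul]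
        have hexp : (n:ℂ) * ((Real.pi / n : ℝ) * Complex.I) = (Real.pi:ℝ) * Complex.I := by
          push_cast
          have : (n:ℂ) ≠ 0 := by exact_mod_cast hn0.ne'
          field_simp
        rw [hexp, Complex.exp_pi_mul_I, ← Complex.ofReal_pow, hrn]
        push_cast
        ring
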